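/- Completeness of the first verification equation (Equation (1)) of the structure-preserving constant-size signature scheme CSIG: for every k ∈ ℕ, elements g_r ∈ 𝔾₁ and g₂ ∈ 𝔾₂, scalars α, γ_z, ζ, ρ, τ ∈ R and γ : Fin k → R, and every message vector m : Fin k → 𝔾₂, define g_z = γ_z • g_r, gᵢ = γᵢ • g_r (i = 1..k), z = ζ • g₂, r = (α − ρ·τ − γ_z·ζ) • g₂ − Σᵢ γᵢ • mᵢ, s = ρ • g_r, and t = τ • g₂. Then e(g_z, z) + e(g_r, r) + e(s, t) + Σᵢ e(gᵢ, mᵢ) = e(g_r, α • g₂), i.e. an honestly generated CSIG signature satisfies verification equation (1) with A = e(g_r, α • g₂). -/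
import Mathlib

/-- Completeness of verification equation (1) of the structure-preserving
constant-size signature scheme CSIG, over a commutative ring `R` with
`R`-modules `𝔾₁, 𝔾₂, 𝔾₃` and an `R`-bilinear map `e : 𝔾₁ → 𝔾₂ → 𝔾₃`:
an honestly generated signature satisfies
`e(g_z, z) + e(g_r, r) + e(s, t) + Σᵢ e(gᵢ, mᵢ) = e(g_r, α • g₂)`. -/
theorem csig_verify_eq1_complete {R : Type*} [CommRing R]
    {G₁ G₂ G₃ : Type*} [AddCommGroup G₁] [AddCommGroup G₂] [AddCommGroup G₃]
    [Module R G₁] [Module R G₂] [Module R G₃]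
    (e : G₁ →ₗ[R] G₂ →ₗ[R] G₃)
    (k : ℕ) (g_r : G₁) (g₂ : G₂)
    (α γ_z ζ ρ τ : R) (γ : Fin k → R)
    (m : Fin k → G₂)
    (g_z s : G₁) (gi : Fin k → G₁) (z r t : G₂)
    (hg_z : g_z = γ_z • g_r)
    (hgi : ∀ i, gi i = γ i • g_r)
    (hz : z = ζ • g₂)
    (hr : r = (α - ρ * τ - γ_z * ζ) • g₂ - ∑ i, γ i • m i)
    (hs : s = ρ • g_r)
    (ht : t = τ • g₂) :
    e g_z z + e g_r r + e s t + ∑ i, e (gi i) (m i) = e g_r (α • g₂) := by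
  subst hg_z hz hr hs ht
  simp only [hgi, map_smul, map_sub, map_sum, LinearMap.smul_apply, LinearMap.sub_apply,
    LinearMap.sum_apply, smul_smul, sub_smul, smul_sub]
  module
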